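/- Every finite MDP has at least one Blackwell-optimal policy: there exist a policy π* and γ' ∈ [0,1) such that V^{π*}_γ(s) ≥ V^{π}_γ(s) for all states s, all policies π, and all γ ∈ (γ', 1). -/

import Mathlib

open Matrix Polynomial Finset

/-- Contraction comparison principle: if `x ≤ γ P x` componentwise with `P`
row-stochastic and `0 ≤ γ < 1`, then `x ≤ 0`. -/
private lemma bw_nonpos {S : Type} [Fintype S] [Nonempty S]
    {γ : ℝ} (hγ0 : 0 ≤ γ) (hγ1 : γ < 1)
    (P : S → S → ℝ) (hP0 : ∀ s s', 0 ≤ P s s') (hP1 : ∀ s, ∑ s', P s s' = 1)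
    (x : S → ℝ) (hx : ∀ s, x s ≤ γ * ∑ s', P s s' * x s') :
    ∀ s, x s ≤ 0 := by
  obtain ⟨s0, -, hs0⟩ := Finset.exists_max_image Finset.univ x univ_nonempty
  have key : x s0 ≤ γ * x s0 := by
    calc x s0 ≤ γ * ∑ s', P s0 s' * x s' := hx s0
      _ ≤ γ * ∑ s', P s0 s' * x s0 := by
          apply mul_le_mul_of_nonneg_left _ hγ0
          exact Finset.sum_le_sum fun i _ =>
            mul_le_mul_of_nonneg_left (hs0 i (mem_univ _)) (hP0 _ _)
      _ = γ * x s0 := by rw [← Finset.sum_mul, hP1]; ring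
  have h0 : x s0 ≤ 0 := by nlinarith
  exact fun s => le_trans (hs0 s (mem_univ _)) h0

/-- **Existence of a Blackwell-optimal policy** (Blackwell 1962). Every finite MDP
has a policy `π⋆` and a threshold `γ' ∈ [0,1)` such that `π⋆` is discount-optimal
for every discount factor `γ ∈ (γ',1)`. -/
theorem exists_blackwell_optimal_policy
    (S A : Type) [Fintype S] [Fintype A] [Nonempty S] [Nonempty A]
    (T : S → A → S → ℝ) (R : S → A → ℝ)
    (hT_nonneg : ∀ s a s', 0 ≤ T s a s')
    (hT_sum : ∀ s a, ∑ s', T s a s' = 1)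
    (V : (S → A) → ℝ → S → ℝ)
    (hV : ∀ (π : S → A) (γ : ℝ), 0 ≤ γ → γ < 1 →
      ∀ s, V π γ s = R s (π s) + γ * ∑ s', T s (π s) s' * V π γ s') :
    ∃ (πstar : S → A) (γ' : ℝ), 0 ≤ γ' ∧ γ' < 1 ∧
      ∀ (π : S → A) (s : S) (γ : ℝ), γ' < γ → γ < 1 →
        V π γ s ≤ V πstar γ s := by
  classical
  -- the transition matrix of a policy, the matrix `I - γ P`, and its polynomial version
  set M : (S → A) → ℝ → Matrix S S ℝ :=
    fun π γ => (1 : Matrix S S ℝ) - γ • (Matrix.of fun s s' => T s (π s) s') with hM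
  set Mp : (S → A) → Matrix S S (Polynomial ℝ) :=
    fun π => (1 : Matrix S S (Polynomial ℝ)) -
      (X : Polynomial ℝ) • (Matrix.of fun s s' => (C (T s (π s) s') : Polynomial ℝ)) with hMp
  have hmap : ∀ (π : S → A) (γ : ℝ), (Mp π).map (eval γ) = M π γ := by
    intro π γ
    ext s s'
    simp [hM, hMp, Matrix.map_apply, Matrix.sub_apply, Matrix.one_apply, Matrix.smul_apply,
      apply_ite (eval γ)]
    ring
  -- Bellman equation in matrix form
  have hBell : ∀ (π : S → A) (γ : ℝ), 0 ≤ γ → γ < 1 →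
      (M π γ) *ᵥ (V π γ) = fun s => R s (π s) := by
    intro π γ h0 h1
    funext s
    have hb := hV π γ h0 h1 s
    simp only [hM, Matrix.mulVec, dotProduct, Matrix.sub_apply, Matrix.one_apply,
      Matrix.smul_apply, Matrix.of_apply, sub_mul, ite_mul, one_mul, zero_mul, smul_eq_mul,
      Finset.sum_sub_distrib, Finset.sum_ite_eq, mem_univ, if_true]
    rw [Finset.sum_congr rfl (fun i _ => by ring : ∀ i ∈ univ, γ * T s (π s) i * V π γ i
      = γ * (T s (π s) i * V π γ i)), ← Finset.mul_sum]
    linarith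
  -- kernel triviality of `M π γ`
  have hker : ∀ (π : S → A) (γ : ℝ), 0 ≤ γ → γ < 1 →
      ∀ x : S → ℝ, (M π γ) *ᵥ x = 0 → x = 0 := by
    intro π γ h0 h1 x hx
    have heq : ∀ s, x s = γ * ∑ s', T s (π s) s' * x s' := by
      intro s
      have := congrFun hx s
      simp only [hM, Matrix.mulVec, dotProduct, Matrix.sub_apply, Matrix.one_apply,
        Matrix.smul_apply, Matrix.of_apply, sub_mul, ite_mul, one_mul, zero_mul, smul_eq_mul,
        Finset.sum_sub_distrib, Finset.sum_ite_eq, mem_univ, if_true, Pi.zero_apply] at this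
      rw [Finset.sum_congr rfl (fun i _ => by ring : ∀ i ∈ univ, γ * T s (π s) i * x i
        = γ * (T s (π s) i * x i)), ← Finset.mul_sum] at this
      linarith
    have h1' := bw_nonpos h0 h1 (fun s s' => T s (π s) s') (fun s s' => hT_nonneg _ _ _)
      (fun s => hT_sum _ _) x (fun s => le_of_eq (heq s))
    have h2' := bw_nonpos h0 h1 (fun s s' => T s (π s) s') (fun s s' => hT_nonneg _ _ _)
      (fun s => hT_sum _ _) (fun s => - x s) (by
        intro s
        have : - x s = γ * ∑ s', T s (π s) s' * (- x s') := by
          rw [Finset.sum_congr rfl (fun i _ => by ring : ∀ i ∈ univ,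
            T s (π s) i * (- x i) = - (T s (π s) i * x i)), Finset.sum_neg_distrib]
          rw [heq s]; ring
        exact le_of_eq this)
    funext s
    have ha := h1' s
    have hb : - x s ≤ 0 := h2' s
    simp only [Pi.zero_apply]
    linarith
  -- determinant and numerator polynomials
  set dp : (S → A) → Polynomial ℝ := fun π => (Mp π).det with hdp
  set qp : (S → A) → S → Polynomial ℝ :=
    fun π s => cramer (Mp π) (fun t => C (R t (π t))) s with hqp
  have hevald : ∀ (π : S → A) (γ : ℝ), eval γ (dp π) = (M π γ).det := by
    intro π γ
    have := RingHom.map_det (evalRingHom γ) (Mp π)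
    rw [hdp]
    simpa [hmap π γ] using this
  have hevalq : ∀ (π : S → A) (γ : ℝ) (s : S),
      eval γ (qp π s) = cramer (M π γ) (fun t => R t (π t)) s := by
    intro π γ s
    rw [hqp]
    simp only [cramer_apply]
    have := RingHom.map_det (evalRingHom γ) ((Mp π).updateCol s (fun t => C (R t (π t))))
    simp only [RingHom.mapMatrix_apply, Polynomial.coe_evalRingHom] at this
    rw [this, Matrix.map_updateCol, hmap π γ]
    have hcol : (eval γ ∘ fun t => (C (R t (π t)) : Polynomial ℝ)) = fun t => R t (π t) := by
      funext t; simp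
    rw [hcol]
  -- the key Cramer identity
  have hcram : ∀ (π : S → A) (γ : ℝ), 0 ≤ γ → γ < 1 → ∀ s,
      eval γ (qp π s) = eval γ (dp π) * V π γ s := by
    intro π γ h0 h1 s
    have hinj : ∀ x y : S → ℝ, (M π γ) *ᵥ x = (M π γ) *ᵥ y → x = y := by
      intro x y hxy
      have : (M π γ) *ᵥ (x - y) = 0 := by
        rw [Matrix.mulVec_sub, hxy, sub_self]
      have := hker π γ h0 h1 _ this
      funext t
      have := congrFun this t
      simp only [Pi.sub_apply, Pi.zero_apply] at this
      linarith
    have h2 : (M π γ) *ᵥ (cramer (M π γ) (fun t => R t (π t)))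
        = (M π γ) *ᵥ ((M π γ).det • V π γ) := by
      rw [Matrix.mulVec_cramer, Matrix.mulVec_smul, hBell π γ h0 h1]
    have h3 := hinj _ _ h2
    have := congrFun h3 s
    simp only [Pi.smul_apply, smul_eq_mul] at this
    rw [hevalq π γ s, hevald π γ, this]
  -- positivity of the determinant on [0,1)
  have hdetne : ∀ (π : S → A) (γ : ℝ), 0 ≤ γ → γ < 1 → eval γ (dp π) ≠ 0 := by
    intro π γ h0 h1 hz
    rw [hevald] at hz
    obtain ⟨v, hv, hv0⟩ := (Matrix.exists_mulVec_eq_zero_iff).2 hz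
    exact hv (hker π γ h0 h1 v hv0)
  have hdet0 : ∀ π : S → A, eval 0 (dp π) = 1 := by
    intro π
    rw [hevald]
    have : M π 0 = 1 := by
      rw [hM]; simp
    rw [this, Matrix.det_one]
  have hdetpos : ∀ (π : S → A) (γ : ℝ), 0 ≤ γ → γ < 1 → 0 < eval γ (dp π) := by
    intro π γ h0 h1
    by_contra hle
    push_neg at hle
    have hlt : eval γ (dp π) < 0 := lt_of_le_of_ne hle (hdetne π γ h0 h1)
    have hcont : ContinuousOn (fun x => eval x (dp π)) (Set.Icc 0 γ) :=
      ((dp π).continuous).continuousOn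
    have := intermediate_value_Icc' h0 hcont
    have h0mem : (0 : ℝ) ∈ Set.Icc (eval γ (dp π)) (eval 0 (dp π)) := by
      rw [hdet0]
      exact ⟨le_of_lt hlt, zero_le_one⟩
    obtain ⟨c, hc, hc0⟩ := this h0mem
    exact hdetne π c hc.1 (lt_of_le_of_lt hc.2 h1) hc0
  -- difference polynomials and the threshold γ'
  set pd : (S → A) → (S → A) → S → Polynomial ℝ :=
    fun π1 π2 s => qp π2 s * dp π1 - qp π1 s * dp π2 with hpd
  have hpdeval : ∀ (π1 π2 : S → A) (γ : ℝ), 0 ≤ γ → γ < 1 → ∀ s,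
      eval γ (pd π1 π2 s) = eval γ (dp π1) * eval γ (dp π2) * (V π2 γ s - V π1 γ s) := by
    intro π1 π2 γ h0 h1 s
    rw [hpd]
    simp only [eval_sub, eval_mul]
    rw [hcram π1 γ h0 h1 s, hcram π2 γ h0 h1 s]
    ring
  set polys : Finset (Polynomial ℝ) :=
    (Finset.univ : Finset ((S → A) × (S → A) × S)).image
      (fun pr => pd pr.1 pr.2.1 pr.2.2) with hpolys
  set rootsI : Finset ℝ :=
    (polys.biUnion (fun p => p.roots.toFinset)).filter (fun x => x < 1) with hrootsI
  set γ' : ℝ := (insert (0:ℝ) rootsI).max' (insert_nonempty _ _) with hγ'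
  have hγ'0 : 0 ≤ γ' := Finset.le_max' _ 0 (mem_insert_self _ _)
  have hγ'1 : γ' < 1 := by
    apply Finset.max'_lt_iff _ _ |>.2
    intro y hy
    rcases Finset.mem_insert.1 hy with h | h
    · rw [h]; exact zero_lt_one
    · exact (Finset.mem_filter.1 h).2
  -- no polynomial in `polys` has a root in (γ', 1)
  have hnoroot : ∀ (p : Polynomial ℝ), p ∈ polys → p ≠ 0 →
      ∀ γ : ℝ, γ' < γ → γ < 1 → eval γ p ≠ 0 := by
    intro p hp hpne γ hγl hγu hev
    have hroot : γ ∈ rootsI := by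
      rw [hrootsI]
      refine Finset.mem_filter.2 ⟨?_, hγu⟩
      refine Finset.mem_biUnion.2 ⟨p, hp, ?_⟩
      rw [Multiset.mem_toFinset, Polynomial.mem_roots hpne]
      exact hev
    have : γ ≤ γ' := Finset.le_max' _ γ (Finset.mem_insert_of_mem hroot)
    linarith
  -- reference discount factor
  set γ0 : ℝ := (γ' + 1) / 2 with hγ0def
  have hγ0l : γ' < γ0 := by rw [hγ0def]; linarith
  have hγ0u : γ0 < 1 := by rw [hγ0def]; linarith
  have hγ00 : 0 ≤ γ0 := le_trans hγ'0 (le_of_lt hγ0l)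
  -- the policy maximizing the total value at γ0
  obtain ⟨πstar, -, hπstar⟩ := Finset.exists_max_image (Finset.univ : Finset (S → A))
    (fun π => ∑ s, V π γ0 s) univ_nonempty
  -- policy improvement: πstar is pointwise optimal at γ0
  have hopt0 : ∀ (π : S → A) (s : S), V π γ0 s ≤ V πstar γ0 s := by
    by_contra hcon
    push_neg at hcon
    obtain ⟨π, s1, hs1⟩ := hcon
    set π'' : S → A := fun s => if V πstar γ0 s < V π γ0 s then π s else πstar s with hπ''
    set W : S → ℝ := fun s => max (V πstar γ0 s) (V π γ0 s) with hW
    have hWle : ∀ s, W s ≤ R s (π'' s) + γ0 * ∑ s', T s (π'' s) s' * W s' := by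
      intro s
      by_cases h : V πstar γ0 s < V π γ0 s
      · have hWs : W s = V π γ0 s := max_eq_right (le_of_lt h)
        have hps : π'' s = π s := if_pos h
        rw [hWs, hps, hV π γ0 hγ00 hγ0u s]
        apply add_le_add le_rfl
        apply mul_le_mul_of_nonneg_left _ hγ00
        apply Finset.sum_le_sum
        intro i _
        exact mul_le_mul_of_nonneg_left (le_max_right _ _) (hT_nonneg _ _ _)
      · have hWs : W s = V πstar γ0 s := max_eq_left (not_lt.1 h)
        have hps : π'' s = πstar s := if_neg h
        rw [hWs, hps, hV πstar γ0 hγ00 hγ0u s]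
        apply add_le_add le_rfl
        apply mul_le_mul_of_nonneg_left _ hγ00
        apply Finset.sum_le_sum
        intro i _
        exact mul_le_mul_of_nonneg_left (le_max_left _ _) (hT_nonneg _ _ _)
    have hcomp : ∀ s, W s - V π'' γ0 s ≤ 0 := by
      apply bw_nonpos hγ00 hγ0u (fun s s' => T s (π'' s) s')
        (fun s s' => hT_nonneg _ _ _) (fun s => hT_sum _ _)
      intro s
      have h1 := hWle s
      have h2 := hV π'' γ0 hγ00 hγ0u s
      have h3 : ∑ s', T s (π'' s) s' * (W s' - V π'' γ0 s')
          = (∑ s', T s (π'' s) s' * W s') - ∑ s', T s (π'' s) s' * V π'' γ0 s' := by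
        rw [← Finset.sum_sub_distrib]
        exact Finset.sum_congr rfl (fun i _ => by ring)
      rw [h3, mul_sub]
      linarith
    have hWge : ∀ s, V πstar γ0 s ≤ V π'' γ0 s := by
      intro s
      have := hcomp s
      have : W s ≤ V π'' γ0 s := by linarith
      exact le_trans (le_max_left _ _) this
    have hstrict : V πstar γ0 s1 < V π'' γ0 s1 := by
      have := hcomp s1
      have hW1 : V π γ0 s1 ≤ W s1 := le_max_right _ _
      linarith
    have hsum : ∑ s, V πstar γ0 s < ∑ s, V π'' γ0 s :=
      Finset.sum_lt_sum (fun i _ => hWge i) ⟨s1, mem_univ _, hstrict⟩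
    have := hπstar π'' (mem_univ _)
    linarith
  -- conclusion
  refine ⟨πstar, γ', hγ'0, hγ'1, ?_⟩
  intro π s γ hγl hγu
  have hγ0' : 0 ≤ γ := le_trans hγ'0 (le_of_lt hγl)
  set p : Polynomial ℝ := pd πstar π s with hp
  have hpmem : p ∈ polys := by
    rw [hpolys]
    exact Finset.mem_image.2 ⟨(πstar, π, s), mem_univ _, rfl⟩
  have hevγ : eval γ p = eval γ (dp πstar) * eval γ (dp π) * (V π γ s - V πstar γ s) :=
    hpdeval πstar π γ hγ0' hγu s
  have hevγ0 : eval γ0 p = eval γ0 (dp πstar) * eval γ0 (dp π) * (V π γ0 s - V πstar γ0 s) :=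
    hpdeval πstar π γ0 hγ00 hγ0u s
  by_cases hp0 : p = 0
  · -- the two value functions coincide
    have : eval γ p = 0 := by rw [hp0]; simp
    rw [hevγ] at this
    have d1 := hdetpos πstar γ hγ0' hγu
    have d2 := hdetpos π γ hγ0' hγu
    have : V π γ s - V πstar γ s = 0 := by
      rcases mul_eq_zero.1 this with h | h
      · exact absurd h (by positivity)
      · exact h
    linarith
  · -- sign of `p` is constant on (γ', 1)
    have hneg0 : eval γ0 p < 0 := by
      have hne := hnoroot p hpmem hp0 γ0 hγ0l hγ0u
      have d1 := hdetpos πstar γ0 hγ00 hγ0u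
      have d2 := hdetpos π γ0 hγ00 hγ0u
      have hdiff := hopt0 π s
      have hle : eval γ0 p ≤ 0 := by
        rw [hevγ0]
        exact mul_nonpos_of_nonneg_of_nonpos (mul_pos d1 d2).le (by linarith)
      exact lt_of_le_of_ne hle hne
    by_contra hlt
    push_neg at hlt
    have d1 := hdetpos πstar γ hγ0' hγu
    have d2 := hdetpos π γ hγ0' hγu
    have hposγ : 0 < eval γ p := by
      rw [hevγ]
      exact mul_pos (mul_pos d1 d2) (by linarith)
    have hcont : Continuous fun x => eval x p := p.continuous
    obtain ⟨c, hcmem, hc0⟩ : ∃ c, c ∈ Set.Icc (min γ0 γ) (max γ0 γ) ∧ eval c p = 0 := by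
      rcases le_total γ0 γ with h | h
      · have him := intermediate_value_Icc h (hcont.continuousOn)
        have h0m : (0:ℝ) ∈ Set.Icc (eval γ0 p) (eval γ p) := ⟨hneg0.le, hposγ.le⟩
        obtain ⟨c, hc, hc0⟩ := him h0m
        exact ⟨c, by rwa [min_eq_left h, max_eq_right h], hc0⟩
      · have him := intermediate_value_Icc' h (hcont.continuousOn)
        have h0m : (0:ℝ) ∈ Set.Icc (eval γ0 p) (eval γ p) := ⟨hneg0.le, hposγ.le⟩
        obtain ⟨c, hc, hc0⟩ := him h0m
        exact ⟨c, by rwa [min_eq_right h, max_eq_left h], hc0⟩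
    have hcγ' : γ' < c := lt_of_lt_of_le (lt_min hγ0l hγl) hcmem.1
    have hc1 : c < 1 := lt_of_le_of_lt hcmem.2 (max_lt hγ0u hγu)
    exact hnoroot p hpmem hp0 c hcγ' hc1 hc0
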